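/- Let R be a finite commutative chain ring with maximal ideal ⟨s⟩ of nilpotency index t, and let f ∈ R[x] be a monic polynomial whose reduction modulo ⟨s^{t-k}⟩ is considered, with 0 ≤ k ≤ t. Then the ideal s^k·(R[x]/⟨f⟩) is isomorphic as a module to (R/⟨s^{t-k}⟩)[x]/⟨f̄⟩, and hence |s^k·(R[x]/⟨f⟩)| = |R/⟨s⟩|^{(t-k)·deg f}. -/

import Mathlib

private lemma myCardSubQuot {R M : Type*} [Ring R] [AddCommGroup M] [Module R M] [Finite M]
    (N : Submodule R M) : Nat.card M = Nat.card (M ⧸ N) * Nat.card N := by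
  rw [AddSubgroup.card_eq_card_quotient_mul_card_addSubgroup N.toAddSubgroup]
  rfl

private def myPiEquiv {ι R M : Type*} [Semiring R] [AddCommMonoid M] [Module R M]
    (p : ι → Submodule R M) :
    (Submodule.pi Set.univ p : Submodule R (ι → M)) ≃+ ∀ i, p i where
  toFun v := fun i => ⟨v.1 i, (Submodule.mem_pi.1 v.2) i (Set.mem_univ i)⟩
  invFun w := ⟨fun i => (w i).1, Submodule.mem_pi.2 fun i _ => (w i).2⟩
  left_inv v := rfl
  right_inv w := rfl
  map_add' v w := rfl

private lemma myAnnPow {R : Type*} [CommRing R] [IsLocalRing R]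
    (s : R) (hM : IsLocalRing.maximalIdeal R = Ideal.span {s})
    (t : ℕ) (ht : 1 ≤ t) (hst : s ^ t = 0) (hst' : s ^ (t - 1) ≠ 0)
    {j : ℕ} (hj : j ≤ t) (a : R) :
    a * s ^ j = 0 ↔ a ∈ Ideal.span {s ^ (t - j)} := by
  classical
  constructor
  · intro h
    by_cases ha : a = 0
    · simp [ha]
    have hPt : ¬ a ∈ Ideal.span {s ^ t} := by
      rw [hst, Ideal.span_singleton_eq_bot.2 rfl]
      simpa using ha
    have hex : ∃ i, ¬ a ∈ Ideal.span {s ^ i} := ⟨t, hPt⟩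
    set m := Nat.find hex with hm
    have hm1 : 1 ≤ m := by
      rcases Nat.eq_zero_or_pos m with h0 | h1
      · exfalso; have := Nat.find_spec hex; rw [← hm, h0] at this; simp at this
      · exact h1
    have hmt : m ≤ t := Nat.find_le hPt
    set i := m - 1 with hi
    have hPi : a ∈ Ideal.span {s ^ i} := by
      by_contra hc
      have h2 : m ≤ i := hm ▸ Nat.find_le hc
      omega
    have hPi1 : ¬ a ∈ Ideal.span {s ^ (i + 1)} := by
      have : i + 1 = m := by omega
      rw [this, hm]; exact Nat.find_spec hex
    obtain ⟨b, hb⟩ := Ideal.mem_span_singleton'.1 hPi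
    have hbu : IsUnit b := by
      by_contra hnu
      have : b ∈ IsLocalRing.maximalIdeal R := hnu
      rw [hM, Ideal.mem_span_singleton'] at this
      obtain ⟨c, hc⟩ := this
      exact hPi1 (Ideal.mem_span_singleton'.2 ⟨c, by rw [← hb, ← hc]; ring⟩)
    have hsij : s ^ (i + j) = 0 := by
      have h2 : b * s ^ (i + j) = 0 := by
        rw [pow_add, ← mul_assoc, hb, h]
      obtain ⟨u, hu⟩ := hbu
      have := congrArg (fun x => (↑u⁻¹ : R) * x) h2
      simpa [← hu, ← mul_assoc] using this
    have hij : t ≤ i + j := by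
      by_contra hc
      push_neg at hc
      apply hst'
      have : s ^ (t - 1) = s ^ (i + j) * s ^ (t - 1 - (i + j)) := by
        rw [← pow_add]; congr 1; omega
      rw [this, hsij, zero_mul]
    refine Ideal.mem_span_singleton'.2 ⟨b * s ^ (i - (t - j)), ?_⟩
    rw [← hb, mul_assoc, ← pow_add]
    congr 2
    omega
  · intro h
    obtain ⟨c, hc⟩ := Ideal.mem_span_singleton'.1 h
    rw [← hc, mul_assoc, ← pow_add]
    have : t - j + j = t := by omega
    rw [this, hst, mul_zero]

private lemma myCardQ {R : Type*} [CommRing R] [Finite R] [IsLocalRing R]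
    (s : R) (hM : IsLocalRing.maximalIdeal R = Ideal.span {s})
    (t : ℕ) (ht : 1 ≤ t) (hst : s ^ t = 0) (hst' : s ^ (t - 1) ≠ 0) :
    ∀ j, j ≤ t → Nat.card (R ⧸ Ideal.span {s ^ j}) =
      Nat.card (R ⧸ Ideal.span ({s} : Set R)) ^ j := by
  intro j
  induction j with
  | zero =>
    intro _
    have h1 : Ideal.span {s ^ 0} = (⊤ : Ideal R) := by simp [Ideal.span_singleton_one]
    rw [h1, pow_zero]
    have : Subsingleton (R ⧸ (⊤ : Ideal R)) := Submodule.Quotient.subsingleton_iff.2 rfl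
    exact Nat.card_eq_one_iff_unique.2 ⟨⟨fun a b => Subsingleton.elim a b⟩, ⟨0⟩⟩
  | succ j ih =>
    intro hj1
    have hj : j ≤ t := by omega
    set I : Ideal R := Ideal.span {s ^ (j + 1)} with hI
    set J : Ideal R := Ideal.span {s ^ j} with hJ
    have hIJ : I ≤ J := by
      apply Ideal.span_singleton_le_span_singleton.2
      exact ⟨s, by ring⟩
    set K : Ideal (R ⧸ I) := J.map (Ideal.Quotient.mk I) with hK
    set ψ : R →ₗ[R] (R ⧸ I) := I.mkQ.comp (LinearMap.toSpanSingleton R R (s ^ j)) with hψ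
    have hrange : LinearMap.range ψ = K.restrictScalars R := by
      ext x
      simp only [hψ, LinearMap.mem_range, LinearMap.coe_comp, Function.comp_apply,
        Submodule.mkQ_apply, Submodule.restrictScalars_mem, hK,
        Ideal.mem_map_iff_of_surjective _ Ideal.Quotient.mk_surjective]
      constructor
      · rintro ⟨c, rfl⟩
        exact ⟨c • s ^ j, Ideal.mem_span_singleton'.2 ⟨c, by simp [smul_eq_mul]⟩, rfl⟩
      · rintro ⟨a, haJ, rfl⟩
        obtain ⟨c, rfl⟩ := Ideal.mem_span_singleton'.1 haJ
        exact ⟨c, by simp [LinearMap.toSpanSingleton_apply, smul_eq_mul]⟩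
    have hker : LinearMap.ker ψ = (Ideal.span {s} : Ideal R).restrictScalars R := by
      ext a
      simp only [LinearMap.mem_ker, hψ, LinearMap.coe_comp, Function.comp_apply,
        Submodule.mkQ_apply, LinearMap.toSpanSingleton_apply, smul_eq_mul,
        Submodule.Quotient.mk_eq_zero, Submodule.restrictScalars_mem]
      constructor
      · intro h
        obtain ⟨c, hc⟩ := Ideal.mem_span_singleton'.1 h
        have h0 : (a - c * s) * s ^ j = 0 := by
          rw [sub_mul, mul_assoc, ← pow_succ', hc, sub_self]
        have := (myAnnPow s hM t ht hst hst' hj _).1 h0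
        have hsub : Ideal.span {s ^ (t - j)} ≤ Ideal.span ({s} : Set R) := by
          apply Ideal.span_singleton_le_span_singleton.2
          exact ⟨s ^ (t - j - 1), by rw [← pow_succ']; congr 1; omega⟩
        have h2 : a - c * s ∈ Ideal.span ({s} : Set R) := hsub this
        have h3 : c * s ∈ Ideal.span ({s} : Set R) :=
          Ideal.mem_span_singleton'.2 ⟨c, rfl⟩
        simpa using add_mem h2 h3
      · intro h
        obtain ⟨c, rfl⟩ := Ideal.mem_span_singleton'.1 h
        exact Ideal.mem_span_singleton'.2 ⟨c, by rw [mul_assoc, ← pow_succ']⟩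
    have e1 : ((R ⧸ I) ⧸ K) ≃+* R ⧸ J := DoubleQuot.quotQuotEquivQuotOfLE hIJ
    have e2 : (R ⧸ (Ideal.span ({s} : Set R)).restrictScalars R) ≃ₗ[R] LinearMap.range ψ :=
      hker ▸ ψ.quotKerEquivRange
    have : Finite (R ⧸ I) := Finite.of_surjective _ Ideal.Quotient.mk_surjective
    have hcard1 : Nat.card (R ⧸ I) = Nat.card ((R ⧸ I) ⧸ K) * Nat.card K := myCardSubQuot K
    have hcardK : Nat.card K = Nat.card (R ⧸ Ideal.span ({s} : Set R)) := by
      have h1 : Nat.card K = Nat.card (K.restrictScalars R) := rfl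
      rw [h1, ← hrange, ← Nat.card_congr e2.toEquiv]
      rfl
    rw [hcard1, hcardK, Nat.card_congr e1.toEquiv, ih hj, pow_succ]

theorem card_scaled_quotient_chain_ring
    (R : Type*) [CommRing R] [Finite R] [IsLocalRing R]
    (hchain : ∀ I J : Ideal R, I ≤ J ∨ J ≤ I)
    (s : R) (hM : IsLocalRing.maximalIdeal R = Ideal.span {s})
    (t : ℕ) (ht : 1 ≤ t) (hst : s ^ t = 0) (hst' : s ^ (t - 1) ≠ 0)
    (f : Polynomial R) (hf : f.Monic) (k : ℕ) (hk : k ≤ t) :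
    let Γ := Polynomial R ⧸ Ideal.span {f}
    let sk : Γ := Ideal.Quotient.mk (Ideal.span {f}) (Polynomial.C (s ^ k))
    let fbar : Polynomial (R ⧸ Ideal.span {s ^ (t - k)}) :=
      f.map (Ideal.Quotient.mk (Ideal.span ({s ^ (t - k)} : Set R)))
    Nonempty ((Ideal.span {sk} : Ideal Γ) ≃+
        (Polynomial (R ⧸ Ideal.span {s ^ (t - k)}) ⧸ Ideal.span {fbar})) ∧
      Nat.card (Ideal.span {sk} : Ideal Γ) =
        Nat.card (R ⧸ Ideal.span ({s} : Set R)) ^ ((t - k) * f.natDegree) := by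
  intro Γ sk fbar
  classical
  rcases eq_or_lt_of_le hk with hkt | hkt
  · -- degenerate case k = t
    subst hkt
    have hsk0 : sk = 0 := by
      show Ideal.Quotient.mk (Ideal.span {f}) (Polynomial.C (s ^ k)) = 0
      rw [hst, map_zero, map_zero]
    have hbot : (Ideal.span {sk} : Ideal Γ) = ⊥ := by
      rw [hsk0]; exact Ideal.span_singleton_eq_bot.2 rfl
    have hzero : ∀ x : (Ideal.span {sk} : Ideal Γ), x = 0 := by
      intro x
      apply Subtype.ext
      obtain ⟨c, hc⟩ := Ideal.mem_span_singleton'.1 x.2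
      show (x : Γ) = 0
      rw [← hc, hsk0, mul_zero]
    have hsub1 : Subsingleton (Ideal.span {sk} : Ideal Γ) :=
      ⟨fun a b => by rw [hzero a, hzero b]⟩
    have hQtriv : Subsingleton (R ⧸ Ideal.span {s ^ (k - k)}) := by
      apply Submodule.Quotient.subsingleton_iff.2
      have : s ^ (k - k) = 1 := by rw [Nat.sub_self, pow_zero]
      rw [this, Ideal.span_singleton_one]
    have hPtriv : Subsingleton (Polynomial (R ⧸ Ideal.span {s ^ (k - k)}) ⧸ Ideal.span {fbar}) := by
      have : Subsingleton (Polynomial (R ⧸ Ideal.span {s ^ (k - k)})) := inferInstance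
      exact Function.Surjective.subsingleton Ideal.Quotient.mk_surjective
    constructor
    · exact ⟨AddEquiv.mk ⟨fun _ => 0, fun _ => 0, fun x => Subsingleton.elim _ _,
        fun x => Subsingleton.elim _ _⟩ (fun _ _ => Subsingleton.elim _ _)⟩
    · rw [Nat.sub_self, zero_mul, pow_zero]
      exact Nat.card_eq_one_iff_unique.2 ⟨hsub1, ⟨0⟩⟩
  -- main case k < t
  have hQfin : Finite (R ⧸ Ideal.span {s ^ (t - k)}) := Finite.of_surjective _ Ideal.Quotient.mk_surjective
  have hfbar : fbar.Monic := hf.map _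
  -- Power basis for Γ = AdjoinRoot f
  let B : PowerBasis R (AdjoinRoot f) := AdjoinRoot.powerBasis' hf
  let e : AdjoinRoot f ≃ₗ[R] (Fin B.dim → R) := B.basis.equivFun
  let I0 : Ideal R := Ideal.span {s ^ k}
  let S : Submodule R (AdjoinRoot f) :=
    (Ideal.span {(sk : AdjoinRoot f)} : Ideal (AdjoinRoot f)).restrictScalars R
  have hskalg : (sk : AdjoinRoot f) = algebraMap R (AdjoinRoot f) (s ^ k) := rfl
  have hS : ∀ x : AdjoinRoot f, x ∈ S ↔ ∃ c : AdjoinRoot f, s ^ k • c = x := by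
    intro x
    rw [Submodule.restrictScalars_mem]; erw [Ideal.mem_span_singleton']
    constructor
    · rintro ⟨c, rfl⟩
      exact ⟨c, by rw [Algebra.smul_def, hskalg, mul_comm]⟩
    · rintro ⟨c, rfl⟩
      exact ⟨c, by rw [Algebra.smul_def, hskalg, mul_comm]⟩
  have hmap : Submodule.map (e : AdjoinRoot f →ₗ[R] (Fin B.dim → R)) S =
      Submodule.pi Set.univ (fun _ : Fin B.dim => I0) := by
    ext v
    rw [Submodule.mem_map, Submodule.mem_pi]
    constructor
    · rintro ⟨x, hx, rfl⟩
      obtain ⟨c, rfl⟩ := (hS x).1 hx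
      intro i _
      refine Ideal.mem_span_singleton'.2 ⟨e c i, ?_⟩
      simp [map_smul, smul_eq_mul, mul_comm]
    · intro hv
      choose a ha using fun i => Ideal.mem_span_singleton'.1 (hv i (Set.mem_univ i))
      refine ⟨s ^ k • e.symm a, (hS _).2 ⟨e.symm a, rfl⟩, ?_⟩
      funext i
      simp only [map_smul, LinearEquiv.coe_coe, LinearEquiv.apply_symm_apply,
        Pi.smul_apply, smul_eq_mul]
      rw [mul_comm]
      exact ha i
  -- the scalar equivalence I0 ≃ R ⧸ J
  let μ : R →ₗ[R] R := LinearMap.toSpanSingleton R R (s ^ k)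
  have hkerμ : (Ideal.span {s ^ (t - k)} : Submodule R R) = LinearMap.ker μ := by
    ext a
    rw [LinearMap.mem_ker, LinearMap.toSpanSingleton_apply, smul_eq_mul]
    exact (myAnnPow s hM t ht hst hst' hk a).symm
  have hrangeμ : LinearMap.range μ = (I0 : Submodule R R) :=
    (LinearMap.span_singleton_eq_range R R (s ^ k)).symm
  let E4 : (R ⧸ (Ideal.span {s ^ (t - k)} : Ideal R)) ≃ₗ[R] I0 :=
    ((Submodule.quotEquivOfEq _ _ hkerμ).trans μ.quotKerEquivRange).trans
      (LinearEquiv.ofEq _ _ hrangeμ)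
  -- assembling
  let E1 : S ≃ₗ[R] Submodule.map (e : AdjoinRoot f →ₗ[R] (Fin B.dim → R)) S :=
    e.submoduleMap S
  let E2 := LinearEquiv.ofEq _ _ hmap
  let E3 := myPiEquiv (fun _ : Fin B.dim => I0)
  let E5 : S ≃+ (Fin B.dim → R ⧸ Ideal.span {s ^ (t - k)}) :=
    (((E1.toAddEquiv.trans E2.toAddEquiv).trans E3).trans
      (AddEquiv.piCongrRight fun _ => E4.symm.toAddEquiv))
  -- power basis on the other side
  have hQnontriv : Nontrivial (R ⧸ Ideal.span {s ^ (t - k)}) := by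
    apply Ideal.Quotient.nontrivial_iff.mpr
    intro htop
    have hle : Ideal.span {s ^ (t - k)} ≤ IsLocalRing.maximalIdeal R := by
      rw [hM]
      apply Ideal.span_singleton_le_span_singleton.2
      exact ⟨s ^ (t - k - 1), by rw [← pow_succ']; congr 1; omega⟩
    exact (IsLocalRing.maximalIdeal.isMaximal R).ne_top (eq_top_iff.2 (htop ▸ hle))
  let B' : PowerBasis (R ⧸ Ideal.span {s ^ (t - k)}) (AdjoinRoot fbar) := AdjoinRoot.powerBasis' hfbar
  have hdim : B.dim = B'.dim := by
    have h1 : B.dim = f.natDegree := rfl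
    have h2 : B'.dim = fbar.natDegree := rfl
    have h3 : fbar.natDegree = f.natDegree := hf.natDegree_map _
    rw [h1, h2, h3]
  let E6 : (Fin B.dim → R ⧸ Ideal.span {s ^ (t - k)}) ≃+ (Fin B'.dim → R ⧸ Ideal.span {s ^ (t - k)}) :=
    AddEquiv.arrowCongr (finCongr hdim) (AddEquiv.refl _)
  let e' : AdjoinRoot fbar ≃ₗ[R ⧸ Ideal.span {s ^ (t - k)}] (Fin B'.dim → R ⧸ Ideal.span {s ^ (t - k)}) := B'.basis.equivFun
  let E : S ≃+ AdjoinRoot fbar := (E5.trans E6).trans e'.symm.toAddEquiv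
  constructor
  · exact ⟨E⟩
  · have hcard : Nat.card (Ideal.span {sk} : Ideal Γ) = Nat.card (Fin B.dim → R ⧸ Ideal.span {s ^ (t - k)}) :=
      Nat.card_congr E5.toEquiv
    have hfin : Nat.card (Fin B.dim) = B.dim := by
      simp [Nat.card_eq_fintype_card]
    rw [hcard, Nat.card_fun, hfin]
    have h1 : B.dim = f.natDegree := rfl
    rw [h1, myCardQ s hM t ht hst hst' (t - k) (by omega), ← pow_mul]
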